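/- arXiv:2206.02991 — 3 statements merged into one kernel-verified Lean document; each statement's English description precedes it below -/
import Mathlib

section
/- Let γ > 0, X ∈ ℝ^{m×n}, y, z ∈ ℝ^m. If (w̃, α̃) satisfies w̃ᵀw̃ + α̃² = 1 with α̃ ≠ 1, and w = (√γ/(1−α̃))·w̃, α = (1+α̃)/(1−α̃), then ‖(α·z + X·w)/(1+α) − y‖² = ‖(α̃/2)·z + (√γ/2)·X·w̃ − (y − z/2)‖². -/
open Matrix

theorem stmt_3 (m n : ℕ) (γ : ℝ) (hγ : 0 < γ)
    (X : Matrix (Fin m) (Fin n) ℝ) (y z : Fin m → ℝ)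
    (w' : Fin n → ℝ) (α' : ℝ)
    (hsph : w' ⬝ᵥ w' + α' ^ 2 = 1) (hne : α' ≠ 1)
    (w : Fin n → ℝ) (α : ℝ)
    (hw : w = (Real.sqrt γ / (1 - α')) • w')
    (hα : α = (1 + α') / (1 - α')) :
    ((1 + α)⁻¹ • (α • z + X.mulVec w) - y) ⬝ᵥ ((1 + α)⁻¹ • (α • z + X.mulVec w) - y)
      = ((α' / 2) • z + (Real.sqrt γ / 2) • X.mulVec w' - (y - (1 / 2 : ℝ) • z)) ⬝ᵥ
        ((α' / 2) • z + (Real.sqrt γ / 2) • X.mulVec w' - (y - (1 / 2 : ℝ) • z)) := by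
  have h1 : (1:ℝ) - α' ≠ 0 := sub_ne_zero.mpr (Ne.symm hne)
  subst hw hα
  have hveq : ((1 + (1 + α') / (1 - α'))⁻¹ •
      (((1 + α') / (1 - α')) • z + X.mulVec ((Real.sqrt γ / (1 - α')) • w')) - y)
      = ((α' / 2) • z + (Real.sqrt γ / 2) • X.mulVec w' - (y - (1 / 2 : ℝ) • z)) := by
    funext i
    simp only [mulVec_smul, Pi.sub_apply, Pi.add_apply, Pi.smul_apply, smul_eq_mul]
    field_simp
    ring
  rw [hveq]
end

section
/- If (w̃, α̃) is an ε-optimal solution of the SCLS with α̃ ≠ 1 (i.e. feasible with objective at most ṽ* + ε), then (w, α) with w = (√γ/(1−α̃))w̃, α = (1+α̃)/(1−α̃) is an ε-optimal solution of the QFP, provided the QFP attains its infimum. -/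
open Matrix

/-- QFP objective `v(w, α) = ‖(αz + Xw)/(1+α) − y‖²`. -/
noncomputable def qfpV {m n : ℕ} (X : Matrix (Fin m) (Fin n) ℝ) (y z : Fin m → ℝ)
    (w : Fin n → ℝ) (α : ℝ) : ℝ :=
  ((1 + α)⁻¹ • (α • z + X.mulVec w) - y) ⬝ᵥ ((1 + α)⁻¹ • (α • z + X.mulVec w) - y)

/-- SCLS objective `ṽ(w̃, α̃) = ‖(α̃/2)z + (√γ/2)Xw̃ − (y − z/2)‖²`. -/
noncomputable def sclsV {m n : ℕ} (γ : ℝ) (X : Matrix (Fin m) (Fin n) ℝ) (y z : Fin m → ℝ)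
    (w' : Fin n → ℝ) (α' : ℝ) : ℝ :=
  ((α' / 2) • z + (Real.sqrt γ / 2) • X.mulVec w' - (y - (1 / 2 : ℝ) • z)) ⬝ᵥ
    ((α' / 2) • z + (Real.sqrt γ / 2) • X.mulVec w' - (y - (1 / 2 : ℝ) • z))

lemma vec_eq1 {m n : ℕ} (γ : ℝ) (X : Matrix (Fin m) (Fin n) ℝ)
    (y z : Fin m → ℝ) (w' : Fin n → ℝ) (α' : ℝ) (h : (1:ℝ) - α' ≠ 0) :
    (1 + (1 + α') / (1 - α'))⁻¹ • (((1 + α') / (1 - α')) • z +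
        X.mulVec ((Real.sqrt γ / (1 - α')) • w')) - y
      = (α' / 2) • z + (Real.sqrt γ / 2) • X.mulVec w' - (y - (1/2 : ℝ) • z) := by
  rw [Matrix.mulVec_smul]
  funext i
  simp only [Pi.add_apply, Pi.sub_apply, Pi.smul_apply, smul_eq_mul]
  have h2 : (1 + (1 + α') / (1 - α')) = 2 / (1 - α') := by field_simp; ring
  rw [h2]
  field_simp
  ring

lemma vec_eq2 {m n : ℕ} (γ : ℝ) (hγ : 0 < γ) (X : Matrix (Fin m) (Fin n) ℝ)
    (y z : Fin m → ℝ) (w₁ : Fin n → ℝ) (α₁ : ℝ) (h : (1:ℝ) + α₁ ≠ 0) :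
    (((α₁ - 1) / (α₁ + 1)) / 2) • z +
        (Real.sqrt γ / 2) • X.mulVec ((2 / ((1 + α₁) * Real.sqrt γ)) • w₁)
        - (y - (1/2 : ℝ) • z)
      = (1 + α₁)⁻¹ • (α₁ • z + X.mulVec w₁) - y := by
  rw [Matrix.mulVec_smul]
  funext i
  have hs : Real.sqrt γ ≠ 0 := by positivity
  simp only [Pi.add_apply, Pi.sub_apply, Pi.smul_apply, smul_eq_mul]
  have h' : α₁ + 1 ≠ 0 := by intro hh; apply h; linarith
  field_simp
  ring

theorem stmt_8 (m n : ℕ) (γ : ℝ) (hγ : 0 < γ) (ε : ℝ) (hε : 0 ≤ ε)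
    (X : Matrix (Fin m) (Fin n) ℝ) (y z : Fin m → ℝ)
    (hQFP : ∃ (w : Fin n → ℝ) (α : ℝ), w ⬝ᵥ w = γ * α ∧
      ∀ (w₁ : Fin n → ℝ) (α₁ : ℝ), w₁ ⬝ᵥ w₁ = γ * α₁ →
        qfpV X y z w α ≤ qfpV X y z w₁ α₁)
    (w' : Fin n → ℝ) (α' : ℝ)
    (hsph : w' ⬝ᵥ w' + α' ^ 2 = 1) (hne : α' ≠ 1)
    (hepsopt : ∀ (w₁ : Fin n → ℝ) (α₁ : ℝ), w₁ ⬝ᵥ w₁ + α₁ ^ 2 = 1 →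
      sclsV γ X y z w' α' ≤ sclsV γ X y z w₁ α₁ + ε) :
    ((Real.sqrt γ / (1 - α')) • w') ⬝ᵥ ((Real.sqrt γ / (1 - α')) • w')
        = γ * ((1 + α') / (1 - α')) ∧
      ∀ (w₁ : Fin n → ℝ) (α₁ : ℝ), w₁ ⬝ᵥ w₁ = γ * α₁ →
        qfpV X y z ((Real.sqrt γ / (1 - α')) • w') ((1 + α') / (1 - α'))
          ≤ qfpV X y z w₁ α₁ + ε := by
  have hne' : (1:ℝ) - α' ≠ 0 := by intro h; apply hne; linarith
  have hsq : Real.sqrt γ ^ 2 = γ := Real.sq_sqrt hγ.le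
  constructor
  · rw [smul_dotProduct, dotProduct_smul, smul_eq_mul, smul_eq_mul]
    have hw : w' ⬝ᵥ w' = 1 - α' ^ 2 := by linarith
    rw [hw]
    have hm : Real.sqrt γ * Real.sqrt γ = γ := Real.mul_self_sqrt hγ.le
    field_simp
    linear_combination (1 - α' ^ 2) * hm
  · intro w₁ α₁ hfeas
    -- value of transformed point equals sclsV w' α'
    have e1 : qfpV X y z ((Real.sqrt γ / (1 - α')) • w') ((1 + α') / (1 - α'))
        = sclsV γ X y z w' α' := by
      unfold qfpV sclsV
      rw [vec_eq1 γ X y z w' α' hne']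
    -- α₁ ≥ 0
    have hα₁ : 0 ≤ α₁ := by
      have hnn : 0 ≤ w₁ ⬝ᵥ w₁ := Finset.sum_nonneg fun i _ => mul_self_nonneg _
      nlinarith [hfeas]
    have h1α : (1:ℝ) + α₁ ≠ 0 := by positivity
    have hs : Real.sqrt γ ≠ 0 := by positivity
    -- reverse map
    set w₂ : Fin n → ℝ := (2 / ((1 + α₁) * Real.sqrt γ)) • w₁ with hw₂
    set α₂ : ℝ := (α₁ - 1) / (α₁ + 1) with hα₂
    have hsph₂ : w₂ ⬝ᵥ w₂ + α₂ ^ 2 = 1 := by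
      rw [hw₂, hα₂, smul_dotProduct, dotProduct_smul, smul_eq_mul, smul_eq_mul, hfeas]
      have h' : α₁ + 1 ≠ 0 := by positivity
      have hm : Real.sqrt γ * Real.sqrt γ = γ := Real.mul_self_sqrt hγ.le
      field_simp
      linear_combination ((α₁ - 1) ^ 2 * (1 + α₁) ^ 2 - (1 + α₁) ^ 2 * (α₁ + 1) ^ 2) * hm
    have e2 : sclsV γ X y z w₂ α₂ = qfpV X y z w₁ α₁ := by
      unfold qfpV sclsV
      rw [hw₂, hα₂, vec_eq2 γ hγ X y z w₁ α₁ h1α]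
    have := hepsopt w₂ α₂ hsph₂
    rw [e1]
    rw [e2] at this
    exact this
end

section
/- Let H be a symmetric matrix, g a vector, and suppose r* with ‖r*‖ = 1 and multiplier λ* satisfy (H + λ*I)r* = −g and H + λ*I ⪰ 0. If ‖(H − λ_min(H)I)† g‖ > 1, then λ* > −λ_min(H), i.e. H + λ*I is positive definite. -/
open Matrix

theorem stmt_10 (n : ℕ) (H : Matrix (Fin (n + 1)) (Fin (n + 1)) ℝ)
    (hH : H.IsHermitian) (g r : Fin (n + 1) → ℝ) (lam : ℝ)
    (heq : H.mulVec r + lam • r = -g)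
    (hpsd : (H + lam • (1 : Matrix (Fin (n + 1)) (Fin (n + 1)) ℝ)).PosSemidef)
    (hnorm : r ⬝ᵥ r = 1)
    -- `‖(H − λ_min(H) I)† g`: every solution `u` of `(H − λ_min I) u = −g`
    -- (the Moore–Penrose solution being the minimum-norm one) has norm greater than 1
    (hpinv : ∀ u : Fin (n + 1) → ℝ,
      (H - (⨅ i, hH.eigenvalues i) • (1 : Matrix (Fin (n + 1)) (Fin (n + 1)) ℝ)).mulVec u = -g →
        1 < u ⬝ᵥ u) :
    -(⨅ i, hH.eigenvalues i) < lam := by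
  set m : ℝ := ⨅ i, hH.eigenvalues i with hm
  -- the infimum is attained
  obtain ⟨i, hi⟩ := Finite.exists_min hH.eigenvalues
  have hmi : m = hH.eigenvalues i :=
    le_antisymm (ciInf_le (Set.Finite.bddBelow (Set.finite_range _)) i) (le_ciInf hi)
  -- lam ≥ -m via PSD applied to an eigenvector for m
  set v : Fin (n + 1) → ℝ := ⇑(hH.eigenvectorBasis i) with hv
  have hvH : H *ᵥ v = hH.eigenvalues i • v := hH.mulVec_eigenvectorBasis i
  have hvne : v ≠ 0 := by
    rw [hv, Ne, WithLp.ofLp_eq_zero]; exact hH.eigenvectorBasis.orthonormal.ne_zero i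
  have hvv : 0 < v ⬝ᵥ v := by
    rcases Function.ne_iff.mp hvne with ⟨j, hj⟩
    simp only [Pi.zero_apply] at hj
    exact Finset.sum_pos' (fun k _ => mul_self_nonneg _)
      ⟨j, Finset.mem_univ j, mul_self_pos.mpr hj⟩
  have hge : -m ≤ lam := by
    have h0 := hpsd.dotProduct_mulVec_nonneg v
    have : star v ⬝ᵥ ((H + lam • 1) *ᵥ v) = (hH.eigenvalues i + lam) * (v ⬝ᵥ v) := by
      simp [add_mulVec, smul_mulVec, one_mulVec, hvH, dotProduct_add,
        dotProduct_smul, star_trivial, add_mul, smul_eq_mul, mul_comm]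
    rw [this] at h0
    have h1 : 0 ≤ hH.eigenvalues i + lam := (mul_nonneg_iff_of_pos_right hvv).mp h0
    linarith [hmi]
  rcases lt_or_eq_of_le hge with h | h
  · exact h
  · exfalso
    have hr : (H - m • (1 : Matrix (Fin (n + 1)) (Fin (n + 1)) ℝ)) *ᵥ r = -g := by
      rw [sub_mulVec, smul_mulVec, one_mulVec, ← heq, ← h]
      abel_nf
      simp [smul_smul]
    have := hpinv r hr
    rw [hnorm] at this
    exact lt_irrefl 1 this
end
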